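/- Jarzynski equality for minimally invasive (unital) non-ideal measurements (Sec. IV and Appendix A.5 of the paper): if the measurement-disturbance probabilities are doubly stochastic, i.e. additionally ∑ n, q l n = 1 for every l, and the transition matrix satisfies ∑ l, P l m = 1 for every m, then ∑ n m l, p n * q l n * P l m * Real.exp (−β * (Ef m − E⁰ n)) = Zf / Z⁰, i.e. the original Jarzynski relation ⟨e^{−βW}⟩ = e^{−βΔF} holds exactly. -/
import Mathlib


open Finset

/-- Jarzynski equality for minimally invasive (unital) non-ideal measurements:
if the measurement-disturbance probabilities are doubly stochastic and the
transition matrix is doubly stochastic, then the original Jarzynski relation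
`⟨e^{−βW}⟩ = Zf / Z⁰ = e^{−βΔF}` holds exactly. -/
theorem jarzynski_minimally_invasive
    (d : ℕ) (hd : 1 ≤ d) (E0 Ef : Fin d → ℝ) (β : ℝ) (hβ : 0 < β)
    (Z0 Zf : ℝ)
    (hZ0 : Z0 = ∑ n, Real.exp (-β * E0 n))
    (hZf : Zf = ∑ m, Real.exp (-β * Ef m))
    (p : Fin d → ℝ)
    (hp : ∀ n, p n = Real.exp (-β * E0 n) / Z0)
    (P : Fin d → Fin d → ℝ)
    (hP0 : ∀ l m, 0 ≤ P l m)
    (hProw : ∀ l, ∑ m, P l m = 1) (hPcol : ∀ m, ∑ l, P l m = 1)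
    (q : Fin d → Fin d → ℝ)
    (hq0 : ∀ l n, 0 ≤ q l n)
    (hqcol : ∀ n, ∑ l, q l n = 1) (hqrow : ∀ l, ∑ n, q l n = 1) :
    (∑ n, ∑ m, ∑ l, p n * q l n * P l m * Real.exp (-β * (Ef m - E0 n))) =
      Zf / Z0 := by
  have key : ∀ n m l : Fin d,
      p n * q l n * P l m * Real.exp (-β * (Ef m - E0 n)) =
        q l n * P l m * (Real.exp (-β * Ef m) / Z0) := by
    intro n m l
    have h : Real.exp (-β * (Ef m - E0 n)) =
        Real.exp (-β * Ef m) * Real.exp (β * E0 n) := by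
      rw [← Real.exp_add]; ring_nf
    have h2 : Real.exp (-β * E0 n) * Real.exp (β * E0 n) = 1 := by
      rw [← Real.exp_add, show -β * E0 n + β * E0 n = 0 by ring, Real.exp_zero]
    rw [hp n, h]
    linear_combination (q l n * P l m * Real.exp (-β * Ef m) / Z0) * h2
  simp only [key]
  rw [Finset.sum_comm]
  have hm : ∀ m : Fin d, ∑ n, ∑ l, q l n * P l m * (Real.exp (-β * Ef m) / Z0)
      = Real.exp (-β * Ef m) / Z0 := by
    intro m
    rw [Finset.sum_comm]
    have : (∑ l, ∑ n, q l n * P l m * (Real.exp (-β * Ef m) / Z0))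
        = ∑ l, (∑ n, q l n) * (P l m * (Real.exp (-β * Ef m) / Z0)) := by
      simp [Finset.sum_mul, mul_assoc]
    rw [this]
    simp only [hqrow, one_mul]
    rw [← Finset.sum_mul, hPcol m, one_mul]
  simp only [hm]
  rw [← Finset.sum_div, ← hZf]
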